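/- Strict prefix-foremost temporal paths are closed under the operations required for prefix-compatibility: (1) every prefix of a strict prefix-foremost temporal path is a strict prefix-foremost temporal path; and (2) if a strict prefix-foremost s-z-path P goes through a vertex appearance (v,t) and P' is any strict prefix-foremost s-path ending at the vertex appearance (v,t), then the concatenation of P' with the suffix of P starting at (v,t) is again a strict prefix-foremost s-z-path (in particular, the concatenation is a path and not merely a walk). -/

import Mathlib

open scoped Classical

/-- A time arc `(u, v, t)`: a transition from vertex `u` to vertex `v` at time step `t`. -/
abbrev TArc (V : Type*) := V × V × ℕ

/-- A directed temporal graph `𝒢 = (V, ℰ, T)`: the time arcs connect distinct vertices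
and carry time labels in `[T] = {1, …, T}`. -/
structure TemporalGraph (V : Type*) where
  lifetime : ℕ
  arcs : Set (TArc V)
  arcs_valid : ∀ e ∈ arcs, e.1 ≠ e.2.1 ∧ 1 ≤ e.2.2 ∧ e.2.2 ≤ lifetime



namespace TemporalGraph

variable {V : Type*}

/-- `L` is a temporal walk of `G`: a nonempty sequence of time arcs of `G` in which the
endpoint of each arc is the starting point of the next one, with non-decreasing labels. -/
def IsTWalk (G : TemporalGraph V) (L : List (TArc V)) : Prop :=
  L ≠ [] ∧ (∀ e ∈ L, e ∈ G.arcs) ∧ L.Chain' fun e f => e.2.1 = f.1 ∧ e.2.2 ≤ f.2.2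

/-- The walk `L` starts at vertex `s`. -/
def StartsAt (s : V) (L : List (TArc V)) : Prop := ∃ e ∈ L.head?, e.1 = s

/-- The walk `L` ends at vertex `z`. -/
def EndsAt (z : V) (L : List (TArc V)) : Prop := ∃ e ∈ L.getLast?, e.2.1 = z

/-- The walk `L` ends at the vertex appearance `(v, t)`. -/
def EndsAtApp (v : V) (t : ℕ) (L : List (TArc V)) : Prop :=
  ∃ e ∈ L.getLast?, e.2.1 = v ∧ e.2.2 = t

/-- `L` is an `s`-`z`-walk of `G`. -/
def IsWalkFromTo (G : TemporalGraph V) (s z : V) (L : List (TArc V)) : Prop :=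
  G.IsTWalk L ∧ StartsAt s L ∧ EndsAt z L

/-- `L` is an `s`-`(v,t)`-walk of `G`. -/
def IsWalkFromToApp (G : TemporalGraph V) (s v : V) (t : ℕ) (L : List (TArc V)) : Prop :=
  G.IsTWalk L ∧ StartsAt s L ∧ EndsAtApp v t L

/-- The list of vertices visited by a walk (its starting point followed by the
endpoints of all its transitions). -/
def walkVerts (L : List (TArc V)) : List V :=
  (L.head?.map Prod.fst).toList ++ L.map fun e => e.2.1

/-- A temporal path is a temporal walk that visits each vertex at most once. -/
def IsTPath (G : TemporalGraph V) (L : List (TArc V)) : Prop :=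
  G.IsTWalk L ∧ (walkVerts L).Nodup

/-- The walk `L` goes through vertex `v`. -/
def VisitsVertex (v : V) (L : List (TArc V)) : Prop := v ∈ walkVerts L

/-- The walk `L` contains a transition into the vertex appearance `(v, t)`. -/
def ContainsApp (v : V) (t : ℕ) (L : List (TArc V)) : Prop :=
  ∃ e ∈ L, e.2.1 = v ∧ e.2.2 = t

/-- The walk `L`, regarded as a walk starting at source `s`, goes through the vertex
appearance `(v, t)`; by convention the source is visited at the appearance `(s, 0)` only. -/
def VisitsApp (s v : V) (t : ℕ) (L : List (TArc V)) : Prop :=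
  (v = s ∧ t = 0) ∨ (v ≠ s ∧ ContainsApp v t L)

/-- A cost function maps temporal walks (arc sequences) to `ℝ ∪ {∞}`. -/
abbrev CostFn (V : Type*) := List (TArc V) → WithTop ℝ

/-- `c*_s(v, t)`: the minimum value of `c` over all `s`-`(v,t)`-walks; it is `∞` if the
minimum is not defined (not attained) or if there is no such walk. -/
noncomputable def cStar (G : TemporalGraph V) (c : CostFn V) (s v : V) (t : ℕ) : WithTop ℝ :=
  if h : ∃ L, G.IsWalkFromToApp s v t L ∧ ∀ L', G.IsWalkFromToApp s v t L' → c L ≤ c L' then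
    c h.choose
  else ⊤

/-- `c*_s(v) = min_{t ∈ [T]} c*_s(v, t)`. -/
noncomputable def cStarV (G : TemporalGraph V) (c : CostFn V) (s v : V) : WithTop ℝ :=
  (Finset.Icc 1 G.lifetime).inf fun t => G.cStar c s v t

/-- `L` is a `c`-optimal `s`-`(v,t)`-walk: `c L = c*_s(v, t) < ∞`. -/
def IsOptWalkToApp (G : TemporalGraph V) (c : CostFn V) (s v : V) (t : ℕ)
    (L : List (TArc V)) : Prop :=
  G.IsWalkFromToApp s v t L ∧ c L = G.cStar c s v t ∧ c L ≠ ⊤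

/-- `L` is a `c`-optimal `s`-`v`-walk: `c L = c*_s(v) < ∞`. -/
def IsOptWalkTo (G : TemporalGraph V) (c : CostFn V) (s v : V) (L : List (TArc V)) : Prop :=
  G.IsWalkFromTo s v L ∧ c L = G.cStarV c s v ∧ c L ≠ ⊤

/-- The induced set `𝒲^(c)` of optimal temporal walks of `c`. -/
def OptWalks (G : TemporalGraph V) (c : CostFn V) : Set (List (TArc V)) :=
  {L | ∃ s z, G.IsOptWalkTo c s z L}

/-- `c` is prefix-optimal: every prefix of an optimal temporal walk from `s`, ending at a
vertex appearance `(v, t)` of the walk, has cost `c*_s(v, t)`. -/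
def PrefixOptimal (G : TemporalGraph V) (c : CostFn V) : Prop :=
  ∀ L ∈ G.OptWalks c, ∀ s, StartsAt s L →
    ∀ (i : ℕ) (e : TArc V), L[i]? = some e →
      c (L.take (i + 1)) = G.cStar c s e.2.1 e.2.2

/-- `c` is prefix-exchangeable: if an optimal temporal walk from `s` goes through a vertex
appearance `(v, t)`, then replacing its prefix up to `(v, t)` by any `s`-`(v,t)`-walk of
cost `c*_s(v, t)` again yields an optimal temporal walk. -/
def PrefixExchangeable (G : TemporalGraph V) (c : CostFn V) : Prop :=
  ∀ L ∈ G.OptWalks c, ∀ s, StartsAt s L →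
    ∀ (i : ℕ) (e : TArc V), L[i]? = some e →
      ∀ L', G.IsWalkFromToApp s e.2.1 e.2.2 L' → c L' = G.cStar c s e.2.1 e.2.2 →
        L' ++ L.drop (i + 1) ∈ G.OptWalks c

/-- `c` is prefix-compatible if it is both prefix-optimal and prefix-exchangeable. -/
def PrefixCompatible (G : TemporalGraph V) (c : CostFn V) : Prop :=
  G.PrefixOptimal c ∧ G.PrefixExchangeable c

/-- `c` is finite if `𝒲^(c)` has finite cardinality. -/
def FiniteCost (G : TemporalGraph V) (c : CostFn V) : Prop := (G.OptWalks c).Finite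

/-- The direct predecessor relation of source `s` with respect to the walk set `Wset`:
`IsDirPred Wset s p q` holds iff `p ∈ Pre_s(q)`, i.e. iff some walk in `Wset` starting
at `s` visits the vertex appearance `p` directly before the vertex appearance `q`, or
`p = (s, 0)` and some walk in `Wset` starting at `s` begins with a transition into `q`.
This relation is exactly the arc relation of the predecessor graph `G̃_s`. -/
def IsDirPred (Wset : Set (List (TArc V))) (s : V) (p q : V × ℕ) : Prop :=
  ∃ L ∈ Wset, StartsAt s L ∧
    ((∃ (i : ℕ) (e f : TArc V), L[i]? = some e ∧ L[i + 1]? = some f ∧ e.2 = p ∧ f.2 = q) ∨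
      (p = (s, 0) ∧ ∃ f ∈ L.head?, f.2 = q))

/-- A directed path from `p` to `q` in the static digraph given by the arc relation `R`. -/
def IsRelPath {α : Type*} (R : α → α → Prop) (p q : α) (P : List α) : Prop :=
  P.Chain' R ∧ P.head? = some p ∧ P.getLast? = some q ∧ P.Nodup

/-- `σ_{sz}`: the number of `s`-`z`-walks in `𝒲`. -/
noncomputable def sigma (G : TemporalGraph V) (𝒲 : Set (List (TArc V))) (s z : V) : ℕ :=
  {L ∈ 𝒲 | G.IsWalkFromTo s z L}.ncard

/-- `σ_{sz}(v)`: the number of `s`-`z`-walks in `𝒲` that go through the vertex `v`. -/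
noncomputable def sigmaV (G : TemporalGraph V) (𝒲 : Set (List (TArc V))) (s z v : V) : ℕ :=
  {L ∈ 𝒲 | G.IsWalkFromTo s z L ∧ VisitsVertex v L}.ncard

/-- `σ_{sz}(v, t)`: the number of `s`-`z`-walks in `𝒲` that go through the vertex
appearance `(v, t)`. -/
noncomputable def sigmaApp (G : TemporalGraph V) (𝒲 : Set (List (TArc V))) (s z v : V)
    (t : ℕ) : ℕ :=
  {L ∈ 𝒲 | G.IsWalkFromTo s z L ∧ VisitsApp s v t L}.ncard

/-- `σ_{s(v,t)}`: the number of `c`-optimal `s`-`(v,t)`-walks. -/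
noncomputable def sigmaOptApp (G : TemporalGraph V) (c : CostFn V) (s v : V) (t : ℕ) : ℕ :=
  {L | G.IsOptWalkToApp c s v t L}.ncard

/-- The pair dependency `δ_{𝒲,sz}(v)`. -/
noncomputable def pairDep (G : TemporalGraph V) (𝒲 : Set (List (TArc V))) (s z v : V) : ℝ :=
  if 0 < G.sigma 𝒲 s z then (G.sigmaV 𝒲 s z v : ℝ) / (G.sigma 𝒲 s z : ℝ) else 0

/-- The temporal pair dependency `δ_{𝒲,sz}(v, t)`. -/
noncomputable def pairDepApp (G : TemporalGraph V) (𝒲 : Set (List (TArc V))) (s z v : V)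
    (t : ℕ) : ℝ :=
  if 0 < G.sigma 𝒲 s z then (G.sigmaApp 𝒲 s z v t : ℝ) / (G.sigma 𝒲 s z : ℝ) else 0

/-- The cumulative dependency `δ_{𝒲,s}(v)`. -/
noncomputable def cumDep [Fintype V] (G : TemporalGraph V) (𝒲 : Set (List (TArc V)))
    (s v : V) : ℝ :=
  ∑ z : V, G.pairDep 𝒲 s z v

/-- The temporal cumulative dependency `δ_{𝒲,s}(v, t)`. -/
noncomputable def cumDepApp [Fintype V] (G : TemporalGraph V) (𝒲 : Set (List (TArc V)))
    (s v : V) (t : ℕ) : ℝ :=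
  ∑ z : V, G.pairDepApp 𝒲 s z v t

/-- The temporal betweenness centrality `B_𝒲(v) = Σ_{s ≠ v ≠ z} δ_{𝒲,sz}(v)`. -/
noncomputable def btw [Fintype V] (G : TemporalGraph V) (𝒲 : Set (List (TArc V)))
    (v : V) : ℝ :=
  ∑ s : V, ∑ z : V, if s ≠ v ∧ z ≠ v then G.pairDep 𝒲 s z v else 0

/-- The total temporal betweenness centrality `B*_𝒲(v) = Σ_{s, z ∈ V} δ_{𝒲,sz}(v)`. -/
noncomputable def totBtw [Fintype V] (G : TemporalGraph V) (𝒲 : Set (List (TArc V)))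
    (v : V) : ℝ :=
  ∑ s : V, ∑ z : V, G.pairDep 𝒲 s z v

/-- The edge dependency `δ_{𝒲,sz}(v, t, (v, w, t'))`: the fraction of `s`-`z`-walks in `𝒲`
that go through the vertex appearance `(v, t)` and use the time arc `(v, w, t')`. -/
noncomputable def edgeDep (G : TemporalGraph V) (𝒲 : Set (List (TArc V))) (s z v : V)
    (t : ℕ) (w : V) (t' : ℕ) : ℝ :=
  if 0 < G.sigma 𝒲 s z then
    ({L ∈ 𝒲 | G.IsWalkFromTo s z L ∧ VisitsApp s v t L ∧ (v, w, t') ∈ L}.ncard : ℝ) /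
      (G.sigma 𝒲 s z : ℝ)
  else 0

/-- A temporal walk is strict if its time labels are strictly increasing. -/
def StrictWalk (L : List (TArc V)) : Prop := L.Chain' fun e f => e.2.2 < f.2.2

/-- The arrival time of a temporal walk: the time label of its last transition. -/
def arrival (L : List (TArc V)) : ℕ :=
  match L.getLast? with
  | some e => e.2.2
  | none => 0

/-- `L` is a foremost temporal `s`-`z`-walk: the time label of its last transition is
minimum among all temporal `s`-`z`-walks. -/
def Foremost (G : TemporalGraph V) (s z : V) (L : List (TArc V)) : Prop :=
  G.IsWalkFromTo s z L ∧ ∀ L', G.IsWalkFromTo s z L' → arrival L ≤ arrival L'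

/-- `L` is a strict prefix-foremost temporal `s`-`z`-path: it is a temporal path, strict,
foremost, and every (nonempty) prefix of it is foremost. -/
def IsSPF (G : TemporalGraph V) (s z : V) (L : List (TArc V)) : Prop :=
  G.IsTPath L ∧ StrictWalk L ∧ G.Foremost s z L ∧
    ∀ (k : ℕ) (z' : V), 0 < k → EndsAt z' (L.take k) → G.Foremost s z' (L.take k)


section Helpers

variable {V : Type*}

private lemma getLast?_take_succ {α : Type*} {L : List α} {j : ℕ} (hj : j < L.length) :
    (L.take (j + 1)).getLast? = some L[j] := by
  rw [List.getLast?_eq_getElem?]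
  have h1 : (L.take (j + 1)).length = j + 1 := by simp [List.length_take]; omega
  rw [h1, Nat.add_sub_cancel, List.getElem?_take_of_lt (Nat.lt_succ_self j),
    List.getElem?_eq_getElem hj]

private lemma head?_take' {α : Type*} {L : List α} {k : ℕ} (hk : 0 < k) :
    (L.take k).head? = L.head? := by
  cases L with
  | nil => simp
  | cons a l => cases k with
    | zero => omega
    | succ k => simp

private lemma chain'_getElem {α : Type*} {R : α → α → Prop} {L : List α} (h : L.Chain' R)
    {i : ℕ} (hi : i + 1 < L.length) : R L[i] L[i + 1] := by
  have := List.isChain_iff_getElem.1 h i (by omega)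
  simpa using this

private lemma strict_lt {L : List (TArc V)} (h : StrictWalk L) {a b : ℕ}
    (hab : a < b) (hb : b < L.length) : L[a].2.2 < L[b].2.2 := by
  haveI : IsTrans (TArc V) (fun e f => e.2.2 < f.2.2) := ⟨fun _ _ _ => Nat.lt_trans⟩
  have hp : L.Pairwise (fun e f : TArc V => e.2.2 < f.2.2) :=
    List.isChain_iff_pairwise.1 h
  exact List.pairwise_iff_getElem.1 hp a b (by omega) hb hab

private lemma strict_le_getLast {L : List (TArc V)} (h : StrictWalk L)
    {g : TArc V} (hg : L.getLast? = some g) {m : ℕ} (hm : m < L.length) :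
    L[m].2.2 ≤ g.2.2 := by
  rw [List.getLast?_eq_getElem?] at hg
  obtain ⟨h1, h2⟩ := List.getElem?_eq_some_iff.1 hg
  rcases Nat.lt_or_ge m (L.length - 1) with hlt | hge
  · exact le_of_lt (h2 ▸ strict_lt h hlt h1)
  · have : m = L.length - 1 := by omega
    subst this; rw [h2]

end Helpers


private lemma walkVerts_eq {L : List (TArc V)} (h : L ≠ []) :
    walkVerts L = (L.head h).1 :: L.map (fun e => e.2.1) := by
  unfold walkVerts
  rw [List.head?_eq_head h]
  rfl

private lemma walkVerts_append {L₁ L₂ : List (TArc V)} (h : L₁ ≠ []) :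
    walkVerts (L₁ ++ L₂) = walkVerts L₁ ++ L₂.map (fun e => e.2.1) := by
  obtain ⟨a, l, rfl⟩ := List.exists_cons_of_ne_nil h
  simp [walkVerts]

private lemma walkVerts_take_sublist {L : List (TArc V)} {k : ℕ} (hk : 0 < k) :
    List.Sublist (walkVerts (L.take k)) (walkVerts L) := by
  unfold walkVerts
  rw [head?_take' hk, List.map_take]
  exact ((L.map fun e => e.2.1).take_sublist k).append_left _

private lemma ne_nil_of_endsAt {z : V} {L : List (TArc V)} (h : EndsAt z L) : L ≠ [] := by
  rintro rfl
  obtain ⟨e, he, -⟩ := h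
  simp at he

private lemma arrival_take_succ {L : List (TArc V)} {j : ℕ} (hj : j < L.length) :
    arrival (L.take (j + 1)) = L[j].2.2 := by
  unfold arrival
  rw [getLast?_take_succ hj]

private lemma foremost_congr {G : TemporalGraph V} {s z : V} {W W0 : List (TArc V)}
    (h0 : G.Foremost s z W0) (hW : G.IsWalkFromTo s z W) (ha : arrival W = arrival W0) :
    G.Foremost s z W :=
  ⟨hW, fun L' hL' => ha ▸ h0.2 L' hL'⟩

private lemma spf_take {G : TemporalGraph V} {s z : V} {L : List (TArc V)}
    (hL : G.IsSPF s z L) :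
    ∀ (k : ℕ) (z' : V), 0 < k → EndsAt z' (L.take k) → G.IsSPF s z' (L.take k) := by
  obtain ⟨⟨⟨hne, harcs, hchain⟩, hnd⟩, hstrict, hfore, hpre⟩ := hL
  intro k z' hk hend
  have hkne : L.take k ≠ [] := ne_nil_of_endsAt hend
  refine ⟨⟨⟨hkne, fun e he => harcs e (List.mem_of_mem_take he), hchain.take k⟩,
    (walkVerts_take_sublist hk).nodup hnd⟩, hstrict.take k, hpre k z' hk hend, ?_⟩
  intro k' z'' hk' hend'
  rw [List.take_take] at hend' ⊢
  exact hpre (min k' k) z'' (lt_min hk' hk) hend'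


/-- Strict prefix-foremost temporal paths are closed under the
operations required for prefix-compatibility: (1) every (nonempty) prefix of a strict
prefix-foremost temporal path is a strict prefix-foremost temporal path; and (2) if a
strict prefix-foremost `s`-`z`-path `P` goes through a vertex appearance `(v, t)` and
`P'` is any strict prefix-foremost `s`-path ending at the vertex appearance `(v, t)`,
then the concatenation of `P'` with the suffix of `P` starting at `(v, t)` is again a
strict prefix-foremost `s`-`z`-path (in particular it is a path, not merely a walk). -/
theorem spf_closure {V : Type*} [Fintype V] (G : TemporalGraph V) :
    (∀ (s z : V) (L : List (TArc V)), G.IsSPF s z L →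
      ∀ (k : ℕ) (z' : V), 0 < k → EndsAt z' (L.take k) → G.IsSPF s z' (L.take k)) ∧
    (∀ (s z v : V) (t : ℕ) (L : List (TArc V)), G.IsSPF s z L →
      ∀ (i : ℕ) (e : TArc V), L[i]? = some e → e.2 = (v, t) →
        ∀ L', G.IsSPF s v L' → EndsAtApp v t L' →
          G.IsSPF s z (L' ++ L.drop (i + 1))) := by
  constructor
  · exact fun s z L hL => spf_take hL
  · intro s z v t L hL i e hie hevt L' hL' hend'
    obtain ⟨⟨⟨hne, harcs, hchain⟩, hnd⟩, hstrict, hfore, hpre⟩ := hL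
    obtain ⟨hstart, hend⟩ := hfore.1.2
    obtain ⟨hiL, he⟩ := List.getElem?_eq_some_iff.1 hie
    have hv : e.2.1 = v := by rw [hevt]
    have ht : e.2.2 = t := by rw [hevt]
    have hne' : L' ≠ [] := hL'.1.1.1
    obtain ⟨g, hg, hgv, hgt⟩ := hend'
    rw [Option.mem_def] at hg
    by_cases hD : L.drop (i + 1) = []
    · have hlen : L.length ≤ i + 1 := List.drop_eq_nil_iff.1 hD
      have hi1 : L.length - 1 = i := by omega
      have hlast : L.getLast? = some e := by
        rw [List.getLast?_eq_getElem?, hi1, List.getElem?_eq_getElem hiL, he]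
      obtain ⟨e', he', hz⟩ := hend
      rw [Option.mem_def, hlast, Option.some_inj] at he'
      subst he'
      have hzv : z = v := by rw [← hz, hv]
      rw [hD, List.append_nil, hzv]
      exact hL'
    · have hi1L : i + 1 < L.length := by
        rcases Nat.lt_or_ge (i + 1) L.length with h | h
        · exact h
        · exact absurd (List.drop_eq_nil_of_le h) hD
      set D := L.drop (i + 1) with hDdef
      have hDlen : D.length = L.length - (i + 1) := List.length_drop
      have hDpos : 0 < D.length := List.length_pos_iff.2 hD
      have hheadD : D.head? = some L[i + 1] := by
        rw [hDdef, List.head?_drop, List.getElem?_eq_getElem hi1L]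
      have hadj := chain'_getElem hchain hi1L
      have hadjt : L[i].2.2 < L[i + 1].2.2 := chain'_getElem hstrict hi1L
      have hjun1 : g.2.1 = L[i + 1].1 := by rw [hgv, ← hv, ← he]; exact hadj.1
      have hjun2 : g.2.2 < L[i + 1].2.2 := by rw [hgt, ← ht, ← he]; exact hadjt
      have hwalk : G.IsTWalk (L' ++ D) := by
        refine ⟨by simp [hne'], ?_, ?_⟩
        · intro f hf
          rcases List.mem_append.1 hf with h | h
          · exact hL'.1.1.2.1 f h
          · exact harcs f (List.mem_of_mem_drop (hDdef ▸ h))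
        · refine List.isChain_append.2 ⟨hL'.1.1.2.2, hDdef ▸ hchain.drop _, ?_⟩
          intro x hx y hy
          rw [Option.mem_def, hg, Option.some_inj] at hx
          rw [Option.mem_def, hheadD, Option.some_inj] at hy
          subst hx; subst hy
          exact ⟨hjun1, le_of_lt hjun2⟩
      have hstrictA : StrictWalk (L' ++ D) := by
        refine List.isChain_append.2 ⟨hL'.2.1, hDdef ▸ hstrict.drop _, ?_⟩
        intro x hx y hy
        rw [Option.mem_def, hg, Option.some_inj] at hx
        rw [Option.mem_def, hheadD, Option.some_inj] at hy
        subst hx; subst hy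
        exact hjun2
      have hsL' : (L'.head hne').1 = s := by
        obtain ⟨a, ha, has⟩ := hL'.2.2.1.1.2.1
        rw [Option.mem_def, List.head?_eq_head hne', Option.some_inj] at ha
        rw [ha]; exact has
      have hndA : (walkVerts (L' ++ D)).Nodup := by
        rw [walkVerts_append hne', List.nodup_append]
        refine ⟨hL'.1.2, ?_, ?_⟩
        · have h1 : List.Sublist (D.map (fun e => e.2.1)) (L.map (fun e => e.2.1)) := by
            rw [hDdef]; exact (List.drop_sublist (i + 1) L).map _
          have h2 : List.Sublist (L.map (fun e => e.2.1)) (walkVerts L) := by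
            unfold walkVerts; exact List.sublist_append_right _ _
          exact (h1.trans h2).nodup hnd
        · intro w hw x hwD hwx; rw [← hwx] at hwD
          obtain ⟨b, hbD, hbw⟩ := List.mem_map.1 hwD
          obtain ⟨n, hn, hbn⟩ := List.mem_iff_getElem.1 hbD
          have hjL : i + 1 + n < L.length := by omega
          have hDj : D[n] = L[i + 1 + n] := List.getElem_drop
          have hjw : L[i + 1 + n].2.1 = w := by rw [← hDj, hbn, hbw]
          rw [walkVerts_eq hne'] at hw
          rcases List.mem_cons.1 hw with hws | hwm
          · have hsmem : s ∈ L.map (fun e => e.2.1) :=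
              List.mem_map.2 ⟨L[i + 1 + n], List.getElem_mem _, by rw [hjw, hws, hsL']⟩
            rw [walkVerts_eq hne] at hnd
            have hsLh : (L.head hne).1 = s := by
              obtain ⟨a, ha, has⟩ := hstart
              rw [Option.mem_def, List.head?_eq_head hne, Option.some_inj] at ha
              rw [ha]; exact has
            exact (List.nodup_cons.1 hnd).1 (hsLh ▸ hsmem)
          · obtain ⟨b', hb', hb'w⟩ := List.mem_map.1 hwm
            obtain ⟨m, hm, rfl⟩ := List.mem_iff_getElem.1 hb'
            have hendLj : EndsAt w (L.take (i + 1 + n + 1)) :=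
              ⟨L[i + 1 + n], by rw [Option.mem_def, getLast?_take_succ hjL], hjw⟩
            have hf1 := hpre (i + 1 + n + 1) w (Nat.succ_pos _) hendLj
            have hendL'm : EndsAt w (L'.take (m + 1)) :=
              ⟨L'[m], by rw [Option.mem_def, getLast?_take_succ hm], hb'w⟩
            have hf2 := hL'.2.2.2 (m + 1) w (Nat.succ_pos _) hendL'm
            have hle := hf1.2 _ hf2.1
            rw [arrival_take_succ hjL, arrival_take_succ hm] at hle
            have h3 : L'[m].2.2 ≤ g.2.2 := strict_le_getLast hL'.2.1 hg hm
            have h4 : L[i].2.2 < L[i + 1 + n].2.2 := strict_lt hstrict (by omega) hjL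
            have h5 : L[i].2.2 = t := by rw [he, ht]
            omega
      have hstartA : StartsAt s (L' ++ D) := by
        obtain ⟨a, ha, has⟩ := hL'.2.2.1.1.2.1
        rw [Option.mem_def] at ha
        exact ⟨a, by rw [Option.mem_def, List.head?_append, ha]; rfl, has⟩
      have hDlast : D.getLast? = some (D.getLast hD) := List.getLast?_eq_getLast hD
      have hLlast : L.getLast? = some (D.getLast hD) := by
        conv_lhs => rw [← List.take_append_drop (i + 1) L]
        rw [List.getLast?_append, ← hDdef, hDlast]; rfl
      obtain ⟨eL, heL, hzL⟩ := hend
      rw [Option.mem_def, hLlast, Option.some_inj] at heL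
      subst heL
      have hAlast : (L' ++ D).getLast? = some (D.getLast hD) := by
        rw [List.getLast?_append, hDlast]; rfl
      have hendA : EndsAt z (L' ++ D) :=
        ⟨D.getLast hD, by rw [Option.mem_def, hAlast], hzL⟩
      have harrA : arrival (L' ++ D) = arrival L := by
        unfold arrival; rw [hAlast, hLlast]
      have hforeA : G.Foremost s z (L' ++ D) :=
        foremost_congr hfore ⟨hwalk, hstartA, hendA⟩ harrA
      refine ⟨⟨hwalk, hndA⟩, hstrictA, hforeA, ?_⟩
      intro k z'' hk hendk
      rcases le_or_gt k L'.length with hkle | hkgt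
      · rw [List.take_append_of_le_length hkle] at hendk ⊢
        exact hL'.2.2.2 k z'' hk hendk
      · have htakeq : (L' ++ D).take k = L' ++ D.take (k - L'.length) := by
          rw [List.take_append, List.take_of_length_le (le_of_lt hkgt)]
        set r := k - L'.length with hr
        set q := min r D.length with hq
        have hq1 : 1 ≤ q := le_min (by omega) hDpos
        have hqD : q ≤ D.length := min_le_right _ _
        have hDrq : D.take r = D.take q := by
          rcases le_total r D.length with h | h
          · rw [hq, min_eq_left h]
          · rw [List.take_of_length_le h, hq, min_eq_right h, List.take_length]
        have hq' : q - 1 < D.length := by omega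
        have hjL : i + 1 + (q - 1) < L.length := by omega
        have hDq : D[q - 1] = L[i + 1 + (q - 1)] := List.getElem_drop
        have hlastW : (L' ++ D.take r).getLast? = some L[i + 1 + (q - 1)] := by
          rw [List.getLast?_append, hDrq]
          have hqe : q = q - 1 + 1 := by omega
          conv_lhs => rw [hqe]
          rw [getLast?_take_succ hq', hDq]; rfl
        rw [htakeq] at hendk ⊢
        obtain ⟨x, hx, hxz⟩ := hendk
        rw [Option.mem_def, hlastW, Option.some_inj] at hx
        subst hx
        have hendLj : EndsAt z'' (L.take (i + 1 + (q - 1) + 1)) :=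
          ⟨L[i + 1 + (q - 1)], by rw [Option.mem_def, getLast?_take_succ hjL], hxz⟩
        have hforeJ := hpre (i + 1 + (q - 1) + 1) z'' (Nat.succ_pos _) hendLj
        have hWne : L' ++ D.take r ≠ [] := by simp [hne']
        have hWwalk : G.IsTWalk (L' ++ D.take r) := by
          refine ⟨hWne, ?_, ?_⟩
          · intro f hf
            rcases List.mem_append.1 hf with h | h
            · exact hwalk.2.1 f (List.mem_append.2 (Or.inl h))
            · exact hwalk.2.1 f (List.mem_append.2 (Or.inr (List.mem_of_mem_take h)))
          · have heq : L' ++ D.take r = (L' ++ D).take (L'.length + r) := by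
              rw [List.take_append,
                List.take_of_length_le (Nat.le_add_right _ _), Nat.add_sub_cancel_left]
            rw [heq]
            exact hwalk.2.2.take _
        have hWstart : StartsAt s (L' ++ D.take r) := by
          obtain ⟨a, ha, has⟩ := hL'.2.2.1.1.2.1
          rw [Option.mem_def] at ha
          exact ⟨a, by rw [Option.mem_def, List.head?_append, ha]; rfl, has⟩
        have hWend : EndsAt z'' (L' ++ D.take r) :=
          ⟨L[i + 1 + (q - 1)], by rw [Option.mem_def, hlastW], hxz⟩
        have harrW : arrival (L' ++ D.take r) = arrival (L.take (i + 1 + (q - 1) + 1)) := by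
          unfold arrival
          rw [hlastW, getLast?_take_succ hjL]
        exact foremost_congr hforeJ ⟨hWwalk, hWstart, hWend⟩ harrW

end TemporalGraph
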